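/- For all x, y ∈ P, stem(x·stem(y)) = stem(x·y). Moreover, if t, s ∈ ℕ are such that y = stem(y)·b^t and x·stem(y) = stem(x·stem(y))·b^s, then x·y = stem(x·y)·b^{s+t}. -/

import Mathlib

open scoped Classical

namespace BSpaper

/-- The single Baumslag–Solitar relator `a * b^c * (b^d * a)⁻¹` on two generators
(`true` plays the role of `a`, `false` the role of `b`). -/
def rels (c d : ℕ) : Set (FreeGroup Bool) :=
  {FreeGroup.of true * FreeGroup.of false ^ c * (FreeGroup.of false ^ d * FreeGroup.of true)⁻¹}

/-- The Baumslag–Solitar group `BS(c,d) = ⟨a, b ∣ a b^c = b^d a⟩`. -/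
abbrev Grp (c d : ℕ) := PresentedGroup (rels c d)

variable (c d : ℕ)

/-- The generator `a`. -/
def a : Grp c d := PresentedGroup.of true

/-- The generator `b`. -/
def b : Grp c d := PresentedGroup.of false

/-- The submonoid `P` of `BS(c,d)` generated by `a` and `b`. -/
def P : Submonoid (Grp c d) := Submonoid.closure {a c d, b c d}

/-- The word `b^{s₀} a b^{s₁} a ⋯ b^{s_{k-1}} a` associated to a list of digits `s_i < d`. -/
def wordStem : List (Fin d) → Grp c d
  | [] => 1
  | i :: l => b c d ^ (i : ℕ) * a c d * wordStem l

/-- `Σ_k`: the set of stems of height `k`. -/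
def SigmaSet (k : ℕ) : Set (Grp c d) :=
  {g | ∃ l : List (Fin d), l.length = k ∧ wordStem c d l = g}

/-- The data `(l, t)` of a normal-form decomposition `x = (b^{s₀} a ⋯ b^{s_{k-1}} a) * b^t`,
chosen by choice when it exists (it exists, uniquely, for every `x ∈ P`). -/
noncomputable def nf (x : Grp c d) : List (Fin d) × ℕ :=
  if h : ∃ p : List (Fin d) × ℕ, x = wordStem c d p.1 * b c d ^ p.2 then h.choose else ([], 0)

/-- The stem of `x`, i.e. the stem part of the normal form of `x`. -/
noncomputable def stem (x : Grp c d) : Grp c d := wordStem c d (nf c d x).1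

/-- The left-invariant partial order on `BS(c,d)`: `g ≤ h` iff `g⁻¹ * h ∈ P`. -/
def bsLe (g h : Grp c d) : Prop := g⁻¹ * h ∈ P c d

lemma a_mem_P : a c d ∈ P c d := Submonoid.subset_closure (Set.mem_insert _ _)

lemma b_mem_P : b c d ∈ P c d :=
  Submonoid.subset_closure (Set.mem_insert_of_mem _ rfl)

lemma wordStem_mem_P (l : List (Fin d)) : wordStem c d l ∈ P c d := by
  induction l with
  | nil => exact one_mem _
  | cons i l ih =>
      exact mul_mem (mul_mem (pow_mem (b_mem_P c d) _) (a_mem_P c d)) ih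




abbrev Letter := ℤ × Bool

/-- generic one-letter right-multiplication on normal forms:
`act u v e (w, m)` = result of multiplying `w * b^m` on the right by `a^(e)`,
where pushing produces a sign-`e` entry with exponent `m % v` and trailing `u * (m/v)`. -/
def act (u v : ℤ) (e : Bool) : List Letter × ℤ → List Letter × ℤ
  | ([], m) => ([(m % v, e)], u * (m / v))
  | ((s, e') :: w, m) =>
      if e' = !e ∧ m % v = 0 then (w, s + u * (m / v))
      else ((m % v, e) :: (s, e') :: w, u * (m / v))

def OkR (u v : ℤ) (e : Bool) (p : Letter) : Prop := 0 ≤ p.1 ∧ p.1 < (if p.2 = e then v else u)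

def Chn (p q : Letter) : Prop := p.2 = q.2 ∨ p.1 ≠ 0

lemma okR_not (u v : ℤ) (e : Bool) (p : Letter) : OkR u v e p ↔ OkR v u (!e) p := by
  cases e <;> rcases p with ⟨s, e'⟩ <;> cases e' <;> simp [OkR]

lemma act_ok (u v : ℤ) (hv : 0 < v) (e : Bool) (x : List Letter × ℤ)
    (hOk : ∀ p ∈ x.1, OkR u v e p) (hCh : x.1.Chain' Chn) :
    (∀ p ∈ (act u v e x).1, OkR u v e p) ∧ (act u v e x).1.Chain' Chn := by
  obtain ⟨(_ | ⟨⟨s, e'⟩, w⟩), m⟩ := x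
  · refine ⟨?_, by simp [act, List.Chain', List.isChain_singleton]⟩
    intro p hp
    simp [act] at hp
    subst hp
    exact ⟨Int.emod_nonneg m hv.ne', by simpa using Int.emod_lt_of_pos m hv⟩
  · by_cases h : e' = !e ∧ m % v = 0
    · rw [show act u v e ((s, e') :: w, m) = (w, s + u * (m / v)) from by
        simp only [act]; rw [if_pos h]]
      exact ⟨fun p hp => hOk p (List.mem_cons_of_mem _ hp), hCh.tail⟩
    · rw [show act u v e ((s, e') :: w, m) = ((m % v, e) :: (s, e') :: w, u * (m / v)) from by
        simp only [act]; rw [if_neg h]]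
      constructor
      · intro p hp
        rcases List.mem_cons.1 hp with hp | hp
        · subst hp
          exact ⟨Int.emod_nonneg m hv.ne', by simpa using Int.emod_lt_of_pos m hv⟩
        · exact hOk p hp
      · refine List.IsChain.cons_cons ?_ hCh
        by_cases he : e' = e
        · exact Or.inl he.symm
        · have : e' = !e := by cases e <;> cases e' <;> simp_all
          exact Or.inr (by tauto)

lemma act_act (u v : ℤ) (hu : 0 < u) (hv : 0 < v) (e : Bool) (x : List Letter × ℤ)
    (hOk : ∀ p ∈ x.1, OkR u v e p) (hCh : x.1.Chain' Chn) :
    act v u (!e) (act u v e x) = x := by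
  obtain ⟨(_ | ⟨⟨s, e'⟩, w⟩), m⟩ := x
  · show act v u (!e) ([(m % v, e)], u * (m / v)) = ([], m)
    simp only [act]
    rw [if_pos ⟨by simp, Int.mul_emod_right u _⟩]
    rw [Int.mul_ediv_cancel_left _ hu.ne']
    rw [Int.emod_add_mul_ediv]
  · by_cases h : e' = !e ∧ m % v = 0
    · obtain ⟨he', hm⟩ := h
      rw [show act u v e ((s, e') :: w, m) = (w, s + u * (m / v)) from by
        simp only [act]; rw [if_pos ⟨he', hm⟩]]
      have hs : 0 ≤ s ∧ s < u := by
        have := hOk (s, e') (List.mem_cons_self)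
        rw [OkR] at this
        simpa [he', show (!e) ≠ e from by cases e <;> simp] using this
      have hmod : (s + u * (m / v)) % u = s := by
        rw [Int.add_mul_emod_self_left, Int.emod_eq_of_lt hs.1 hs.2]
      have hdiv : (s + u * (m / v)) / u = m / v := by
        rw [mul_comm, Int.add_mul_ediv_right _ _ hu.ne', Int.ediv_eq_zero_of_lt hs.1 hs.2,
          zero_add]
      have hm' : v * (m / v) = m := by
        have := Int.mul_ediv_add_emod m v
        omega
      subst he'
      -- now apply act v u (!e) to (w, s + u*(m/v)); must take push branch
      match w with
      | [] =>
          show act v u (!e) ([], s + u * (m / v)) = ((s, !e) :: [], m)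
          simp only [act, hmod, hdiv, hm']
      | (s2, e2) :: w' =>
          show act v u (!e) ((s2, e2) :: w', s + u * (m / v)) = ((s, !e) :: (s2, e2) :: w', m)
          have hch := List.isChain_cons_cons.1 hCh
          have hne : ¬(e2 = !(!e) ∧ (s + u * (m / v)) % u = 0) := by
            rintro ⟨h1, h2⟩
            rw [hmod] at h2
            rcases hch.1 with h3 | h3
            · simp at h1; rw [h1] at h3; cases e <;> simp_all
            · exact h3 h2
          simp only [act]
          rw [if_neg hne, hmod, hdiv, hm']
    · rw [show act u v e ((s, e') :: w, m) = ((m % v, e) :: (s, e') :: w, u * (m / v)) from by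
        simp only [act]; rw [if_neg h]]
      show act v u (!e) _ = _
      simp only [act]
      rw [if_pos ⟨by simp, Int.mul_emod_right u _⟩, Int.mul_ediv_cancel_left _ hu.ne',
        Int.emod_add_mul_ediv]

lemma act_shift (u v : ℤ) (hv : 0 < v) (e : Bool) (x : List Letter × ℤ) :
    act u v e (x.1, x.2 + v) = ((act u v e x).1, (act u v e x).2 + u) := by
  obtain ⟨w, m⟩ := x
  have hmod : (m + v) % v = m % v := by
    simpa using Int.add_mul_emod_self_left (a := m) (b := v) (c := 1)
  have hdiv : (m + v) / v = m / v + 1 := by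
    simpa using Int.add_mul_ediv_right m 1 hv.ne'
  match w with
  | [] => simp only [act, hmod, hdiv, mul_add, mul_one]
  | (s, e') :: w' =>
      simp only [act, hmod, hdiv]
      by_cases h : e' = !e ∧ m % v = 0
      · rw [if_pos h, if_pos h]; simp [mul_add, add_assoc]
      · rw [if_neg h, if_neg h]; simp [mul_add]

variable (c d : ℕ)

def V (x : List Letter × ℤ) : Prop := (∀ p ∈ x.1, OkR c d true p) ∧ x.1.Chain' Chn

def X := {x : List Letter × ℤ // V c d x}

variable {c d}

def AEquiv (hc : 0 < c) (hd : 0 < d) : Equiv.Perm (X c d) where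
  toFun x := ⟨act c d true x.1, act_ok c d (by exact_mod_cast hd) true x.1 x.2.1 x.2.2⟩
  invFun x := ⟨act d c false x.1, by
    have h := act_ok (u := (d:ℤ)) (v := (c:ℤ)) (by exact_mod_cast hc) false x.1
      (fun p hp => (okR_not c d true p).1 (x.2.1 p hp)) x.2.2
    exact ⟨fun p hp => (okR_not c d true p).2 (by simpa using h.1 p hp), h.2⟩⟩
  left_inv x := Subtype.ext (by
    have := act_act (u := (c:ℤ)) (v := (d:ℤ)) (by exact_mod_cast hc) (by exact_mod_cast hd)
      true x.1 x.2.1 x.2.2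
    simpa using this)
  right_inv x := Subtype.ext (by
    have := act_act (u := (d:ℤ)) (v := (c:ℤ)) (by exact_mod_cast hd) (by exact_mod_cast hc)
      false x.1 (fun p hp => (okR_not c d true p).1 (x.2.1 p hp)) x.2.2
    simpa using this)

def BEquiv : Equiv.Perm (X c d) where
  toFun x := ⟨(x.1.1, x.1.2 + 1), x.2.1, x.2.2⟩
  invFun x := ⟨(x.1.1, x.1.2 - 1), x.2.1, x.2.2⟩
  left_inv x := Subtype.ext (by simp)
  right_inv x := Subtype.ext (by simp)

lemma B_pow (n : ℕ) (x : X c d) :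
    ((BEquiv : Equiv.Perm (X c d)) ^ n) x = ⟨(x.1.1, x.1.2 + n), x.2.1, x.2.2⟩ := by
  induction n with
  | zero => simp; rfl
  | succ n ih =>
      rw [pow_succ', Equiv.Perm.mul_apply, ih]
      apply Subtype.ext
      show ((x.1.1, x.1.2 + (n:ℤ) + 1) : List Letter × ℤ) = (x.1.1, x.1.2 + ((n:ℕ)+1 : ℕ))
      push_cast
      rw [add_assoc]

lemma AB_comm (hc : 0 < c) (hd : 0 < d) :
    (AEquiv hc hd) * (BEquiv) ^ d = (BEquiv) ^ c * (AEquiv hc hd) := by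
  ext x
  rw [Equiv.Perm.mul_apply, Equiv.Perm.mul_apply, B_pow, B_pow]
  apply Subtype.ext
  show act c d true (x.1.1, x.1.2 + (d:ℤ)) = ((act c d true x.1).1, (act c d true x.1).2 + c)
  have := act_shift (u := (c:ℤ)) (v := (d:ℤ)) (by exact_mod_cast hd) true x.1
  simpa using this

def fgen (hc : 0 < c) (hd : 0 < d) : Bool → Equiv.Perm (X c d) :=
  fun e => if e then (AEquiv hc hd).symm else (BEquiv).symm

lemma frel (hc : 0 < c) (hd : 0 < d) :
    ∀ r ∈ rels c d, FreeGroup.lift (fgen hc hd) r = 1 := by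
  intro r hr
  rw [rels, Set.mem_singleton_iff] at hr
  subst hr
  simp only [map_mul, map_pow, map_inv, FreeGroup.lift_apply_of]
  have key : (fgen hc hd true) * (fgen hc hd false) ^ c
      = (fgen hc hd false) ^ d * (fgen hc hd true) := by
    show (AEquiv hc hd).symm * (BEquiv).symm ^ c = (BEquiv).symm ^ d * (AEquiv hc hd).symm
    rw [← Equiv.Perm.inv_def, ← Equiv.Perm.inv_def, inv_pow, inv_pow,
      ← mul_inv_rev, ← mul_inv_rev, AB_comm hc hd]
  rw [key]
  group

noncomputable def φ (hc : 0 < c) (hd : 0 < d) : Grp c d →* Equiv.Perm (X c d) :=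
  PresentedGroup.toGroup (frel hc hd)

noncomputable def evAt (hc : 0 < c) (hd : 0 < d) (g : Grp c d) (p : X c d) : X c d :=
  ((φ hc hd) g)⁻¹ p

lemma evAt_mul (hc : 0 < c) (hd : 0 < d) (g h : Grp c d) (p : X c d) :
    evAt hc hd (g * h) p = evAt hc hd h (evAt hc hd g p) := by
  simp [evAt, map_mul, mul_inv_rev, Equiv.Perm.mul_apply]

lemma evAt_one (hc : 0 < c) (hd : 0 < d) (p : X c d) : evAt hc hd 1 p = p := by
  simp [evAt]

lemma evAt_a (hc : 0 < c) (hd : 0 < d) (p : X c d) :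
    evAt hc hd (a c d) p = AEquiv hc hd p := by
  have : (φ hc hd) (a c d) = (AEquiv hc hd).symm := by
    rw [a, φ]; exact PresentedGroup.toGroup.of (frel hc hd)
  rw [evAt, this, Equiv.Perm.inv_def]
  rfl

lemma evAt_b_pow (hc : 0 < c) (hd : 0 < d) (t : ℕ) (p : X c d) :
    evAt hc hd (b c d ^ t) p = ⟨(p.1.1, p.1.2 + t), p.2.1, p.2.2⟩ := by
  have hb : (φ hc hd) (b c d) = (BEquiv).symm := by
    rw [b, φ]; exact PresentedGroup.toGroup.of (frel hc hd)
  rw [evAt, map_pow, hb, ← inv_pow, ← Equiv.Perm.inv_def, inv_inv, B_pow]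

def encode (l : List (Fin d)) : List Letter := List.map (fun i : Fin d => (((i : ℤ), true) : Letter)) l

lemma evAt_wordStem (hc : 0 < c) (hd : 0 < d) (l : List (Fin d)) (p : X c d)
    (h0 : p.1.2 = 0) (hall : ∀ q ∈ p.1.1, q.2 = true) :
    (evAt hc hd (wordStem c d l) p).1 = ((encode l).reverse ++ p.1.1, 0) ∧
      (∀ q ∈ (evAt hc hd (wordStem c d l) p).1.1, q.2 = true) := by
  induction l generalizing p with
  | nil =>
      rw [wordStem, evAt_one]
      refine ⟨?_, hall⟩
      simp [encode, ← h0]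
  | cons i l ih =>
      rw [wordStem, mul_assoc, evAt_mul, evAt_mul, evAt_a, evAt_b_pow]
      set p1 : X c d := ⟨(p.1.1, p.1.2 + (i:ℕ)), p.2.1, p.2.2⟩ with hp1
      have hstep : (AEquiv hc hd p1).1 = (((i:ℤ), true) :: p.1.1, 0) := by
        show act c d true (p.1.1, p.1.2 + (i:ℕ)) = _
        have hi0 : (0:ℤ) ≤ (i:ℕ) := by positivity
        have hid : ((i:ℕ):ℤ) < (d:ℤ) := by exact_mod_cast i.isLt
        have hm : p.1.2 + (i:ℕ) = ((i:ℕ):ℤ) := by rw [h0, zero_add]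
        have hmod : (((i:ℕ):ℤ)) % d = (i:ℕ) := Int.emod_eq_of_lt hi0 hid
        have hdiv : (((i:ℕ):ℤ)) / d = 0 := Int.ediv_eq_zero_of_lt hi0 hid
        match hw : p.1.1 with
        | [] => simp [act, hm, hmod, hdiv]
        | (s, e') :: w' =>
            have he' : e' = true := hall (s, e') (by rw [hw]; exact List.mem_cons_self)
            simp only [act, hm, hmod, hdiv]
            rw [if_neg (by simp [he'])]
            simp
      have h01 : (AEquiv hc hd p1).1.2 = 0 := by rw [hstep]
      have hall1 : ∀ q ∈ (AEquiv hc hd p1).1.1, q.2 = true := by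
        rw [hstep]
        intro q hq
        rcases List.mem_cons.1 hq with h | h
        · rw [h]
        · exact hall q h
      obtain ⟨h1, h2⟩ := ih (AEquiv hc hd p1) h01 hall1
      refine ⟨?_, h2⟩
      rw [h1, hstep]
      simp [encode, List.append_assoc]

def x0 : X c d := ⟨([], 0), by constructor <;> simp [List.Chain', List.isChain_nil]⟩

lemma wordStem_unique (hc : 0 < c) (hd : 0 < d) (l l' : List (Fin d)) (t t' : ℕ)
    (h : wordStem c d l * b c d ^ t = wordStem c d l' * b c d ^ t') : l = l' ∧ t = t' := by
  have hev := congrArg (fun g => (evAt hc hd g (x0 : X c d)).1) h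
  simp only [evAt_mul, evAt_b_pow] at hev
  obtain ⟨e1, _⟩ := evAt_wordStem hc hd l (x0 : X c d) rfl (by intro q hq; simp [x0] at hq)
  obtain ⟨e2, _⟩ := evAt_wordStem hc hd l' (x0 : X c d) rfl (by intro q hq; simp [x0] at hq)
  rw [e1, e2] at hev
  simp only [Prod.mk.injEq] at hev
  obtain ⟨hlist, hsnd⟩ := hev
  constructor
  · have : encode l = encode l' := by
      have := congrArg List.reverse (by simpa using hlist)
      simpa using this
    have hinj : Function.Injective (fun i : Fin d => (((i : ℤ), true) : Letter)) := by
      intro i j hij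
      simp only [Prod.mk.injEq] at hij
      exact Fin.ext (by exact_mod_cast hij.1)
    exact List.map_injective_iff.2 hinj this
  · omega

variable (c d : ℕ)

lemma rel_ab : a c d * b c d ^ c = b c d ^ d * a c d := by
  have h1 : PresentedGroup.mk (rels c d)
      (FreeGroup.of true * FreeGroup.of false ^ c *
        (FreeGroup.of false ^ d * FreeGroup.of true)⁻¹) = 1 :=
    (QuotientGroup.eq_one_iff _).2 (Subgroup.subset_normalClosure (by simp [rels]))
  simp only [map_mul, map_pow, map_inv] at h1
  exact mul_inv_eq_one.1 h1

lemma a_pow_comm (q : ℕ) : a c d * b c d ^ (c * q) = b c d ^ (d * q) * a c d := by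
  induction q with
  | zero => simp
  | succ q ih =>
      rw [Nat.mul_succ, Nat.mul_succ, pow_add, pow_add, ← mul_assoc, ih,
        mul_assoc, mul_assoc, ← rel_ab]

lemma wordStem_append (l : List (Fin d)) (i : Fin d) :
    wordStem c d (l ++ [i]) = wordStem c d l * (b c d ^ (i : ℕ) * a c d) := by
  induction l with
  | nil => simp [wordStem]
  | cons j l ih =>
      rw [List.cons_append, wordStem, wordStem, ih]
      simp [mul_assoc]

lemma b_pow_mul_a (hd : 0 < d) (t : ℕ) :
    b c d ^ t * a c d = b c d ^ (t % d) * a c d * b c d ^ (c * (t / d)) := by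
  conv_lhs => rw [← Nat.mod_add_div t d, pow_add]
  rw [mul_assoc, ← a_pow_comm c d (t / d), ← mul_assoc]

def nfEx (x : Grp c d) : Prop :=
  ∃ p : List (Fin d) × ℕ, x = wordStem c d p.1 * b c d ^ p.2

lemma nfEx_mul_b_pow {x : Grp c d} (h : nfEx c d x) (n : ℕ) : nfEx c d (x * b c d ^ n) := by
  obtain ⟨⟨l, t⟩, h⟩ := h
  exact ⟨(l, t + n), by rw [h, mul_assoc, ← pow_add]⟩

lemma nfEx_mul_a (hd : 0 < d) {x : Grp c d} (h : nfEx c d x) : nfEx c d (x * a c d) := by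
  obtain ⟨⟨l, t⟩, h⟩ := h
  refine ⟨(l ++ [⟨t % d, Nat.mod_lt _ hd⟩], c * (t / d)), ?_⟩
  rw [h, mul_assoc, b_pow_mul_a c d hd, wordStem_append, mul_assoc, mul_assoc, mul_assoc]

lemma nfEx_mul_wordStem (hd : 0 < d) {x : Grp c d} (h : nfEx c d x) (l' : List (Fin d)) :
    nfEx c d (x * wordStem c d l') := by
  induction l' generalizing x with
  | nil => simpa [wordStem] using h
  | cons i l' ih =>
      have h1 : nfEx c d (x * b c d ^ (i : ℕ) * a c d) :=
        nfEx_mul_a c d hd (nfEx_mul_b_pow c d h (i : ℕ))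
      have := ih h1
      rw [wordStem, ← mul_assoc, ← mul_assoc]
      exact this

lemma mem_P_nfEx (hd : 0 < d) {x : Grp c d} (hx : x ∈ P c d) : nfEx c d x := by
  induction hx using Submonoid.closure_induction with
  | mem g hg =>
      rcases hg with hg | hg
      · exact ⟨([⟨0, hd⟩], 0), by simp [hg, wordStem]⟩
      · rw [Set.mem_singleton_iff] at hg
        exact ⟨([], 1), by simp [hg, wordStem]⟩
  | one => exact ⟨([], 0), by simp [wordStem]⟩
  | mul g h _ _ hg hh =>
      obtain ⟨⟨l', t'⟩, hh'⟩ := hh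
      rw [hh', ← mul_assoc]
      exact nfEx_mul_b_pow c d (nfEx_mul_wordStem c d hd hg l') t'

lemma nf_eq (hc : 0 < c) (hd : 0 < d) {x : Grp c d} {l : List (Fin d)} {t : ℕ}
    (h : x = wordStem c d l * b c d ^ t) : nf c d x = (l, t) := by
  have hex : ∃ p : List (Fin d) × ℕ, x = wordStem c d p.1 * b c d ^ p.2 := ⟨(l, t), h⟩
  rw [nf, dif_pos hex]
  have hspec := hex.choose_spec
  have hu := wordStem_unique hc hd hex.choose.1 l hex.choose.2 t (by rw [← hspec, ← h])
  exact Prod.ext hu.1 hu.2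


/-- For all x, y ∈ P, stem(x·stem(y)) = stem(x·y).  Moreover, if t, s ∈ ℕ are such
that y = stem(y)·b^t and x·stem(y) = stem(x·stem(y))·b^s, then x·y = stem(x·y)·b^(s+t). -/
theorem statement0 (c d : ℕ) (hc : 0 < c) (hd : 0 < d)
    (x y : Grp c d) (hx : x ∈ P c d) (hy : y ∈ P c d) :
    stem c d (x * stem c d y) = stem c d (x * y) ∧
      ∀ t s : ℕ, y = stem c d y * b c d ^ t →
        x * stem c d y = stem c d (x * stem c d y) * b c d ^ s →
        x * y = stem c d (x * y) * b c d ^ (s + t) := by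
  obtain ⟨⟨ly, ty⟩, hy'⟩ := mem_P_nfEx c d hd hy
  have hsy : stem c d y = wordStem c d ly := by rw [stem, nf_eq c d hc hd hy']
  have hxsy_mem : x * stem c d y ∈ P c d := by
    rw [hsy]; exact mul_mem hx (wordStem_mem_P c d ly)
  obtain ⟨⟨L, S⟩, hL⟩ := mem_P_nfEx c d hd hxsy_mem
  have hstem1 : stem c d (x * stem c d y) = wordStem c d L := by
    rw [stem, nf_eq c d hc hd hL]
  have hxy : x * y = wordStem c d L * b c d ^ (S + ty) := by
    rw [hy', ← hsy, ← mul_assoc, hL, mul_assoc, ← pow_add]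
  have hstem2 : stem c d (x * y) = wordStem c d L := by
    rw [stem, nf_eq c d hc hd hxy]
  refine ⟨hstem1.trans hstem2.symm, ?_⟩
  intro t s hyt hxs
  have ht : t = ty := by
    have := wordStem_unique hc hd ly ly t ty (by
      conv_lhs => rw [← hsy, ← hyt]
      exact hy')
    exact this.2
  have hs : s = S := by
    have := wordStem_unique hc hd L L s S (by
      conv_lhs => rw [← hstem1, ← hxs]
      exact hL)
    exact this.2
  rw [hstem2, hs, ht]
  exact hxy

end BSpaper
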